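/- Let U₁, …, U_N be i.i.d. random variables uniformly distributed on [0,1], let p ∈ (0,1), δ ∈ (0,1), and suppose N ≥ 25 log(2/δ). Then with probability at least 1 − δ, |U₍⌈Np⌉₎ − p| ≤ √(3p(1−p) log(2/δ)/N) + 5 log(2/δ)/N, where U₍⌈Np⌉₎ is the ⌈Np⌉-th smallest among U₁, …, U_N. -/

import Mathlib

open MeasureTheory Nat ProbabilityTheory


lemma real_exp_tsum (x : ℝ) : Real.exp x = ∑' n : ℕ, x ^ n / n ! := by
  rw [Real.exp_eq_exp_ℝ]
  exact congrFun NormedSpace.exp_eq_tsum_div x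

lemma two_mul_three_pow_le_factorial (n : ℕ) : 2 * 3 ^ n ≤ (n + 2)! := by
  induction n with
  | zero => simp [Nat.factorial]
  | succ n ih =>
    have h3 : 3 ≤ n + 3 := by omega
    calc 2 * 3 ^ (n+1) = 3 * (2 * 3 ^ n) := by ring
    _ ≤ 3 * (n+2)! := by omega
    _ ≤ (n + 3) * (n+2)! := Nat.mul_le_mul_right _ h3
    _ = (n + 3)! := rfl

lemma bernoulli_mgf_le {q s : ℝ} (hq0 : 0 ≤ q) (hq1 : q ≤ 1) (hs0 : 0 ≤ s) (hs3 : s < 3) :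
    (1 - q) * Real.exp (-(s * q)) + q * Real.exp (s * (1 - q))
      ≤ Real.exp (q * (1 - q) * (s ^ 2 / (2 * (1 - s / 3)))) := by
  have h13 : (0:ℝ) < 1 - s / 3 := by linarith
  set r : ℝ := 1 - q with hrdef
  have hr0 : 0 ≤ r := by simp [hrdef]; linarith
  set G : ℝ := s ^ 2 / (2 * (1 - s / 3)) with hGdef
  have hG0 : 0 ≤ G := div_nonneg (sq_nonneg s) (by linarith)
  have key : r * Real.exp (-(s * q)) + q * Real.exp (s * r) ≤ 1 + q * r * G := by
    set f : ℕ → ℝ := fun n => (r * (-(s * q)) ^ n + q * (s * r) ^ n) / n ! with hf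
    have hf1 : Summable fun n : ℕ => r * ((-(s * q)) ^ n / n !) :=
      (Real.summable_pow_div_factorial _).mul_left _
    have hf2 : Summable fun n : ℕ => q * ((s * r) ^ n / n !) :=
      (Real.summable_pow_div_factorial _).mul_left _
    have hfs : Summable f := by
      refine (hf1.add hf2).congr fun n => ?_
      simp only [hf]; ring
    have hLHS : r * Real.exp (-(s * q)) + q * Real.exp (s * r) = ∑' n, f n := by
      rw [real_exp_tsum, real_exp_tsum, ← tsum_mul_left, ← tsum_mul_left,
        ← Summable.tsum_add hf1 hf2]
      exact tsum_congr fun n => by simp only [hf]; ring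
    have hshift1 : Summable fun n : ℕ => f (n + 1) := (summable_nat_add_iff 1).mpr hfs
    have hshift2 : Summable fun n : ℕ => f (n + 1 + 1) :=
      (summable_nat_add_iff 1).mpr hshift1
    have hf0 : f 0 = 1 := by simp [hf]; linarith
    have hf1v : f 1 = 0 := by simp [hf]; ring
    -- termwise bound
    have hterm : ∀ n : ℕ, f (n + 1 + 1) ≤ q * r * (s ^ 2 / 2) * (s / 3) ^ n := by
      intro n
      have habs : (-(s * q)) ^ (n + 2) ≤ (s * q) ^ (n + 2) := by
        calc (-(s * q)) ^ (n + 2) ≤ |(-(s * q)) ^ (n + 2)| := le_abs_self _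
        _ = |s * q| ^ (n + 2) := by rw [abs_pow, abs_neg]
        _ = (s * q) ^ (n + 2) := by rw [abs_of_nonneg (mul_nonneg hs0 hq0)]
      have hAB : q ^ (n + 1) + r ^ (n + 1) ≤ 1 := by
        have h1 : q ^ (n + 1) ≤ q := by
          simpa using pow_le_pow_of_le_one hq0 hq1 (by omega : 1 ≤ n + 1)
        have h2 : r ^ (n + 1) ≤ r := by
          simpa using pow_le_pow_of_le_one hr0 (by simp [hrdef]; linarith) (by omega : 1 ≤ n + 1)
        have : q + r = 1 := by simp [hrdef]
        linarith
      have hsp : (0:ℝ) ≤ s ^ (n + 2) := pow_nonneg hs0 _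
      have hqrS : (0:ℝ) ≤ s ^ (n + 2) * (q * r) := by positivity
      have hnum : r * (-(s * q)) ^ (n + 2) + q * (s * r) ^ (n + 2)
          ≤ q * r * s ^ (n + 2) := by
        calc r * (-(s * q)) ^ (n + 2) + q * (s * r) ^ (n + 2)
            ≤ r * (s * q) ^ (n + 2) + q * (s * r) ^ (n + 2) :=
              add_le_add_left (mul_le_mul_of_nonneg_left habs hr0) _
        _ = s ^ (n + 2) * (q * r) * (q ^ (n + 1) + r ^ (n + 1)) := by
            rw [mul_pow, mul_pow, pow_succ' q (n + 1), pow_succ' r (n + 1)]; ring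
        _ ≤ s ^ (n + 2) * (q * r) * 1 := mul_le_mul_of_nonneg_left hAB hqrS
        _ = q * r * s ^ (n + 2) := by ring
      have hfact : (2:ℝ) * 3 ^ n ≤ ((n + 2)! : ℝ) := by
        exact_mod_cast two_mul_three_pow_le_factorial n
      have hden : s ^ (n + 2) / ((n + 2)! : ℝ) ≤ s ^ 2 / 2 * (s / 3) ^ n := by
        calc s ^ (n + 2) / ((n + 2)! : ℝ) ≤ s ^ (n + 2) / (2 * 3 ^ n) :=
          div_le_div_of_nonneg_left hsp (by positivity) hfact
        _ = s ^ 2 / 2 * (s / 3) ^ n := by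
            rw [div_pow]
            field_simp
            ring
      have hfc : (0:ℝ) < ((n + 2)! : ℝ) := by exact_mod_cast Nat.factorial_pos (n + 2)
      have hqq : (0:ℝ) ≤ q * r := mul_nonneg hq0 hr0
      calc f (n + 1 + 1) = (r * (-(s * q)) ^ (n + 2) + q * (s * r) ^ (n + 2))
            / ((n + 2)! : ℝ) := rfl
      _ ≤ q * r * s ^ (n + 2) / ((n + 2)! : ℝ) := by
          exact (div_le_div_iff_of_pos_right hfc).mpr hnum
      _ = q * r * (s ^ (n + 2) / ((n + 2)! : ℝ)) := by ring
      _ ≤ q * r * (s ^ 2 / 2 * (s / 3) ^ n) := mul_le_mul_of_nonneg_left hden hqq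
      _ = q * r * (s ^ 2 / 2) * (s / 3) ^ n := by ring
    have hgeo_sum : Summable fun n : ℕ => q * r * (s ^ 2 / 2) * (s / 3) ^ n :=
      (summable_geometric_of_lt_one (by positivity) (by linarith)).mul_left _
    have htail : ∑' n, f (n + 1 + 1) ≤ q * r * G := by
      calc ∑' n, f (n + 1 + 1) ≤ ∑' n : ℕ, q * r * (s ^ 2 / 2) * (s / 3) ^ n :=
        Summable.tsum_le_tsum hterm hshift2 hgeo_sum
      _ = q * r * (s ^ 2 / 2) * (1 - s / 3)⁻¹ := by
          rw [tsum_mul_left, tsum_geometric_of_lt_one (by positivity) (by linarith)]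
      _ = q * r * G := by
          rw [hGdef, ← div_div, div_eq_mul_inv (s ^ 2 / 2), mul_assoc]
    have h01 : f (0 + 1) = 0 := by simpa using hf1v
    rw [hLHS, Summable.tsum_eq_zero_add hfs, Summable.tsum_eq_zero_add hshift1, hf0, h01, zero_add]
    linarith
  calc r * Real.exp (-(s * q)) + q * Real.exp (s * r) ≤ 1 + q * r * G := key
  _ ≤ Real.exp (q * r * G) := by
      have := Real.add_one_le_exp (q * r * G)
      linarith

lemma numeric_ineq {P L s0 a w : ℝ} (hP : 0 ≤ P) (hL : 0 ≤ L) (hs0 : 0 ≤ s0)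
    (hsq : s0 ^ 2 = 3 * P * L) (hw : w ≤ P + (s0 + 5 * L)) (ha : s0 + 5 * L ≤ a) :
    2 * L * (w + a / 3) ≤ a ^ 2 := by
  have ha0 : 0 ≤ a := by linarith
  have key : (s0 + 5 * L) * ((s0 + 5 * L) - (2 / 3) * L) ≤ a * (a - (2 / 3) * L) :=
    mul_le_mul ha (by linarith) (by linarith) ha0
  have hLw : 2 * L * w ≤ 2 * L * (P + s0 + 5 * L) :=
    mul_le_mul_of_nonneg_left (by linarith) (by linarith)
  nlinarith [key, hLw, hsq]

lemma indicator_tail_bound {Ω : Type*} [MeasurableSpace Ω] (μ : Measure Ω)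
    [IsProbabilityMeasure μ]
    (N : ℕ) (q a L m : ℝ) (hq : q ∈ Set.Ioo (0:ℝ) 1) (hN : 1 ≤ N)
    (ha : 0 < a) (hL : 0 ≤ L)
    (hcond : 2 * L * ((N:ℝ) * q * (1 - q) + a / 3) ≤ a ^ 2)
    (hm : (N:ℝ) * q + a ≤ m)
    (X : Fin N → Ω → ℝ)
    (hXind : ProbabilityTheory.iIndepFun X μ)
    (hXm : ∀ i, Measurable (X i))
    (hX01 : ∀ i ω, X i ω = 0 ∨ X i ω = 1)
    (hXq : ∀ i, μ {ω | X i ω = 1} = ENNReal.ofReal q) :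
    (μ {ω | m ≤ ∑ i, X i ω}).toReal ≤ Real.exp (-L) := by
  obtain ⟨hq0, hq1⟩ := hq
  set V : ℝ := (N:ℝ) * q * (1 - q) with hVdef
  have hV0 : 0 < V := by
    have : (1:ℝ) ≤ (N:ℝ) := by exact_mod_cast hN
    have h1q : 0 < 1 - q := by linarith
    positivity
  set D : ℝ := V + a / 3 with hDdef
  have hD0 : 0 < D := by positivity
  set s : ℝ := a / D with hsdef
  have hs0 : 0 ≤ s := le_of_lt (div_pos ha hD0)
  have hs3 : s < 3 := by
    rw [hsdef, div_lt_iff₀ hD0]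
    simp only [hDdef]
    linarith
  -- sum function
  set S : Ω → ℝ := fun ω => ∑ i, X i ω with hSdef
  have hSmeas : Measurable S := by
    apply Finset.measurable_sum
    intro i _
    exact hXm i
  have hSbound : ∀ ω, 0 ≤ S ω ∧ S ω ≤ (N:ℝ) := by
    intro ω
    constructor
    · apply Finset.sum_nonneg
      intro i _
      rcases hX01 i ω with h | h <;> simp [h]
    · have h1 : S ω ≤ ∑ _i : Fin N, (1:ℝ) := by
        apply Finset.sum_le_sum
        intro i _
        rcases hX01 i ω with h | h <;> simp [h]
      simpa using h1
  have hint : Integrable (fun ω => Real.exp (s * S ω)) μ := by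
    apply Integrable.mono' (integrable_const (Real.exp (s * N)))
    · exact ((hSmeas.const_mul s).exp).aestronglyMeasurable
    · filter_upwards with ω
      rw [Real.norm_eq_abs, abs_of_nonneg (Real.exp_nonneg _)]
      apply Real.exp_le_exp.mpr
      exact mul_le_mul_of_nonneg_left (hSbound ω).2 hs0
  have hsub : {ω | m ≤ S ω} ⊆ {ω | (N:ℝ) * q + a ≤ S ω} := fun ω hω =>
    le_trans hm hω
  refine le_trans (ENNReal.toReal_mono (measure_ne_top μ _) (measure_mono hsub)) ?_
  -- Chernoff
  have hcher : (μ {ω | (N:ℝ) * q + a ≤ S ω}).toReal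
      ≤ Real.exp (-s * ((N:ℝ) * q + a)) * mgf S μ s :=
    measure_ge_le_exp_mul_mgf ((N:ℝ) * q + a) hs0 hint
  -- mgf of each indicator
  have hmgf_i : ∀ i, mgf (X i) μ s = (1 - q) + q * Real.exp s := by
    intro i
    have hA : MeasurableSet {ω | X i ω = 1} := (hXm i) (measurableSet_singleton 1)
    have heq : (fun ω => Real.exp (s * X i ω))
        = fun ω => Set.indicator {ω | X i ω = 1} (fun _ => Real.exp s - 1) ω + 1 := by
      funext ω
      rcases hX01 i ω with h | h
      · have : ω ∉ {ω | X i ω = 1} := by simp [Set.mem_setOf_eq, h]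
        simp [h, Set.indicator_of_notMem this]
      · have : ω ∈ {ω | X i ω = 1} := by simp [Set.mem_setOf_eq, h]
        simp [h, Set.indicator_of_mem this]
    rw [mgf, heq]
    rw [integral_add ((integrable_const (Real.exp s - 1)).indicator hA) (integrable_const 1)]
    rw [integral_indicator_const _ hA, integral_const]
    have : (μ.real {ω | X i ω = 1}) = q := by
      rw [measureReal_def, hXq i, ENNReal.toReal_ofReal hq0.le]
    rw [this]
    simp [measure_univ]
    ring
  have hmgf_sum : mgf S μ s = ((1 - q) + q * Real.exp s) ^ N := by
    have hfun : S = ∑ i, X i := by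
      funext ω
      simp [hSdef, Finset.sum_apply]
    rw [hfun, hXind.mgf_sum hXm Finset.univ]
    simp [hmgf_i]
  -- single-factor bound
  have hfac : Real.exp (-(s * q)) * ((1 - q) + q * Real.exp s)
      ≤ Real.exp (q * (1 - q) * (s ^ 2 / (2 * (1 - s / 3)))) := by
    have hrw : Real.exp (-(s * q)) * ((1 - q) + q * Real.exp s)
        = (1 - q) * Real.exp (-(s * q)) + q * Real.exp (s * (1 - q)) := by
      rw [mul_add]
      congr 1
      · ring
      · rw [mul_comm (Real.exp (-(s * q))) (q * Real.exp s), mul_assoc,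
          ← Real.exp_add]
        congr 2
        ring
    rw [hrw]
    exact bernoulli_mgf_le hq0.le hq1.le hs0 hs3
  -- combine
  set G : ℝ := s ^ 2 / (2 * (1 - s / 3)) with hGdef
  have hbase0 : 0 ≤ Real.exp (-(s * q)) * ((1 - q) + q * Real.exp s) :=
    mul_nonneg (Real.exp_nonneg _) (by nlinarith [Real.exp_pos s])
  have hpow : (Real.exp (-(s * q)) * ((1 - q) + q * Real.exp s)) ^ N
      ≤ Real.exp (q * (1 - q) * G) ^ N := pow_le_pow_left₀ hbase0 hfac N
  have hsplit : Real.exp (-s * ((N:ℝ) * q + a)) * ((1 - q) + q * Real.exp s) ^ N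
      = Real.exp (-s * a) * (Real.exp (-(s * q)) * ((1 - q) + q * Real.exp s)) ^ N := by
    rw [mul_pow, ← Real.exp_nat_mul, ← mul_assoc, ← Real.exp_add]
    congr 2
    ring
  have hexp_pow : Real.exp (q * (1 - q) * G) ^ N = Real.exp (V * G) := by
    rw [← Real.exp_nat_mul, hVdef]
    congr 1
    ring
  have hfinal : Real.exp (-s * a) * Real.exp (V * G) ≤ Real.exp (-L) := by
    rw [← Real.exp_add]
    apply Real.exp_le_exp.mpr
    have hGeq : V * G - s * a = -(a ^ 2 / (2 * D)) := by
      have h1 : 1 - s / 3 = V / D := by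
        rw [hsdef]
        field_simp
        simp [hDdef]
        ring
      rw [hGdef, h1, hsdef]
      field_simp
      ring
    have hLD : L * (2 * D) ≤ a ^ 2 := by
      rw [hDdef]
      calc L * (2 * (V + a / 3)) = 2 * L * (V + a / 3) := by ring
      _ ≤ a ^ 2 := by rw [hVdef] at *; exact hcond
    have : L ≤ a ^ 2 / (2 * D) := by
      rw [le_div_iff₀ (by positivity)]
      exact hLD
    linarith [hGeq]
  calc (μ {ω | (N:ℝ) * q + a ≤ S ω}).toReal
      ≤ Real.exp (-s * ((N:ℝ) * q + a)) * mgf S μ s := hcher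
  _ = Real.exp (-s * a) * (Real.exp (-(s * q)) * ((1 - q) + q * Real.exp s)) ^ N := by
      rw [hmgf_sum, hsplit]
  _ ≤ Real.exp (-s * a) * Real.exp (q * (1 - q) * G) ^ N := by
      apply mul_le_mul_of_nonneg_left hpow (Real.exp_nonneg _)
  _ = Real.exp (-s * a) * Real.exp (V * G) := by rw [hexp_pow]
  _ ≤ Real.exp (-L) := hfinal

/-- Concentration of the `⌈Np⌉`-th order statistic of `N` i.i.d. uniform random variables on
`[0,1]` around `p`: with probability at least `1 − δ`,
`|U₍⌈Np⌉₎ − p| ≤ √(3p(1−p)log(2/δ)/N) + 5 log(2/δ)/N`, provided `N ≥ 25 log(2/δ)`. -/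
theorem uniform_order_statistic_concentration {Ω : Type*} [MeasurableSpace Ω]
    (μ : Measure Ω) [IsProbabilityMeasure μ]
    (N : ℕ) (p δ : ℝ) (hp : p ∈ Set.Ioo (0:ℝ) 1) (hδ : δ ∈ Set.Ioo (0:ℝ) 1)
    (hN : 25 * Real.log (2/δ) ≤ (N : ℝ))
    (U : Fin N → Ω → ℝ) (hUmeas : ∀ i, Measurable (U i))
    (hindep : ProbabilityTheory.iIndepFun U μ)
    (hunif : ∀ i, Measure.map (U i) μ = volume.restrict (Set.Icc (0:ℝ) 1))
    (V : Ω → ℝ)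
    (hV : ∀ ω, V ω
      = sInf {t : ℝ | ⌈(N:ℝ)*p⌉₊ ≤ (Finset.univ.filter (fun i : Fin N => U i ω ≤ t)).card}) :
    (1 - δ : ℝ) ≤ (μ {ω | |V ω - p|
        ≤ Real.sqrt (3*p*(1-p)*Real.log (2/δ)/N) + 5*Real.log (2/δ)/N}).toReal := by
  obtain ⟨hp0, hp1⟩ := hp
  obtain ⟨hδ0, hδ1⟩ := hδ
  set L : ℝ := Real.log (2/δ) with hLdef
  have hL0 : 0 < L := Real.log_pos (by rw [lt_div_iff₀ hδ0]; linarith)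
  have hN0 : (0:ℝ) < N := by linarith [hN, mul_pos (by norm_num : (0:ℝ) < 25) hL0]
  have hN1 : 1 ≤ N := by exact_mod_cast Nat.one_le_iff_ne_zero.mpr (by
    intro h; rw [h] at hN0; norm_num at hN0)
  haveI hFinNe : Nonempty (Fin N) := Fin.pos_iff_nonempty.mp (by omega)
  have hune : (Finset.univ : Finset (Fin N)).Nonempty := Finset.univ_nonempty
  set ε : ℝ := Real.sqrt (3*p*(1-p)*L/N) + 5*L/N with hεdef
  have hε0 : 0 < ε := by
    have := Real.sqrt_nonneg (3*p*(1-p)*L/N)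
    have : 0 < 5*L/N := by positivity
    simp only [hεdef]; linarith [Real.sqrt_nonneg (3*p*(1-p)*L/(N:ℝ))]
  set k : ℕ := ⌈(N:ℝ)*p⌉₊ with hkdef
  have hkp : (N:ℝ)*p ≤ k := Nat.le_ceil _
  have hk_lt : (k:ℝ) < (N:ℝ)*p + 1 := Nat.ceil_lt_add_one (by positivity)
  have hk1 : 1 ≤ k := by
    rw [hkdef]
    exact Nat.one_le_iff_ne_zero.mpr (Nat.pos_iff_ne_zero.mp (Nat.ceil_pos.mpr (by positivity)))
  have hkN : k ≤ N := by
    rw [hkdef]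
    apply Nat.ceil_le.mpr
    nlinarith
  set s0 : ℝ := Real.sqrt (3*(N:ℝ)*p*(1-p)*L) with hs0def
  have hs0 : 0 ≤ s0 := Real.sqrt_nonneg _
  have hP0 : (0:ℝ) ≤ (N:ℝ)*p*(1-p) :=
    mul_nonneg (mul_nonneg hN0.le hp0.le) (by linarith)
  have hs0sq : s0 ^ 2 = 3 * ((N:ℝ)*p*(1-p)) * L := by
    rw [hs0def, Real.sq_sqrt (by nlinarith)]
    ring
  have hNε : (N:ℝ) * ε = s0 + 5*L := by
    have h1 : Real.sqrt ((N:ℝ)^2) = (N:ℝ) := Real.sqrt_sq hN0.le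
    have h2 : (N:ℝ) * Real.sqrt (3*p*(1-p)*L/N) = s0 := by
      calc (N:ℝ) * Real.sqrt (3*p*(1-p)*L/N)
          = Real.sqrt ((N:ℝ)^2) * Real.sqrt (3*p*(1-p)*L/N) := by rw [h1]
      _ = Real.sqrt ((N:ℝ)^2 * (3*p*(1-p)*L/N)) := (Real.sqrt_mul (sq_nonneg _) _).symm
      _ = s0 := by rw [hs0def]; congr 1; field_simp
    calc (N:ℝ) * ε = (N:ℝ) * Real.sqrt (3*p*(1-p)*L/N) + (N:ℝ) * (5*L/N) := by
          rw [hεdef]; ring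
    _ = s0 + 5*L := by rw [h2]; congr 1; field_simp
  -- count function
  set c : ℝ → Ω → ℕ := fun t ω => (Finset.univ.filter (fun i : Fin N => U i ω ≤ t)).card
    with hcdef
  have hcmeas : ∀ t : ℝ, Measurable (c t) := by
    intro t
    have heq : c t = fun ω => ∑ i : Fin N, if U i ω ≤ t then 1 else 0 := by
      funext ω
      rw [hcdef]
      exact Finset.card_filter _ _
    rw [heq]
    apply Finset.measurable_sum
    intro i _
    exact Measurable.ite ((hUmeas i) measurableSet_Iic) measurable_const measurable_const
  have hcmono : ∀ (ω) {t t' : ℝ}, t ≤ t' → c t ω ≤ c t' ω := by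
    intro ω t t' htt
    apply Finset.card_le_card
    intro i hi
    rw [Finset.mem_filter] at *
    exact ⟨hi.1, le_trans hi.2 htt⟩
  -- claim A : enough count at t implies V ≤ t
  have claimA : ∀ (ω) (t : ℝ), k ≤ c t ω → V ω ≤ t := by
    intro ω t ht
    rw [hV]
    apply csInf_le
    · refine ⟨Finset.univ.inf' hune (fun i => U i ω), ?_⟩
      intro t' ht'
      simp only [Set.mem_setOf_eq] at ht'
      have hcard : 0 < (Finset.univ.filter (fun i : Fin N => U i ω ≤ t')).card :=
        lt_of_lt_of_le hk1 ht'
      obtain ⟨i, hi⟩ := Finset.card_pos.mp hcard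
      have hi' := Finset.mem_filter.mp hi
      exact le_trans (Finset.inf'_le _ (Finset.mem_univ i)) hi'.2
    · exact ht
  -- claim B : V < t implies count at t at least k
  have claimB : ∀ (ω) (t : ℝ), V ω < t → k ≤ c t ω := by
    intro ω t hVt
    rw [hV] at hVt
    have hSne : {t' : ℝ | k ≤ (Finset.univ.filter (fun i : Fin N => U i ω ≤ t')).card}.Nonempty := by
      refine ⟨Finset.univ.sup' hune (fun i => U i ω), ?_⟩
      simp only [Set.mem_setOf_eq]
      have : Finset.univ.filter (fun i : Fin N => U i ω ≤ Finset.univ.sup' hune (fun i => U i ω))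
          = Finset.univ := by
        apply Finset.filter_true_of_mem
        intro i _
        exact Finset.le_sup' (fun j => U j ω) (Finset.mem_univ i)
      rw [this, Finset.card_univ, Fintype.card_fin]
      exact hkN
    obtain ⟨t', ht'S, ht't⟩ := exists_lt_of_csInf_lt hSne hVt
    exact le_trans ht'S (hcmono ω (le_of_lt ht't))
  set t₁ : ℝ := p + ε with ht1def
  set t₂ : ℝ := p - ε with ht2def
  set A : Set Ω := {ω | c t₁ ω < k} with hAdef
  set B : Set Ω := {ω | k ≤ c t₂ ω} with hBdef
  have hAmeas : MeasurableSet A := (hcmeas t₁) measurableSet_Iio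
  have hBmeas : MeasurableSet B := (hcmeas t₂) measurableSet_Ici
  have hprob : ∀ (i : Fin N) (s : Set ℝ), MeasurableSet s →
      μ (U i ⁻¹' s) = volume (s ∩ Set.Icc 0 1) := by
    intro i s hs
    rw [← Measure.map_apply (hUmeas i) hs, hunif i, Measure.restrict_apply hs]
  have hexpL : Real.exp (-L) = δ/2 := by
    rw [Real.exp_neg, hLdef, Real.exp_log (by positivity), inv_div]
  -- tail bound for B
  have hBbound : μ B ≤ ENNReal.ofReal (δ/2) := by
    by_cases ht20 : t₂ ≤ 0
    · have hB0 : μ B = 0 := by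
        have hsub : B ⊆ ⋃ i : Fin N, (U i ⁻¹' Set.Iic t₂) := by
          intro ω hω
          rw [hBdef] at hω
          have hcard : 0 < (Finset.univ.filter (fun i : Fin N => U i ω ≤ t₂)).card :=
            lt_of_lt_of_le hk1 hω
          obtain ⟨i, hi⟩ := Finset.card_pos.mp hcard
          have hi' := Finset.mem_filter.mp hi
          exact Set.mem_iUnion.mpr ⟨i, hi'.2⟩
        have hnull : ∀ i : Fin N, μ (U i ⁻¹' Set.Iic t₂) = 0 := by
          intro i
          rw [hprob i _ measurableSet_Iic]
          have : Set.Iic t₂ ∩ Set.Icc 0 1 ⊆ {0} := by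
            intro x hx
            simp only [Set.mem_Iic, Set.mem_Icc, Set.mem_inter_iff] at hx
            simp only [Set.mem_singleton_iff]
            linarith [hx.1, hx.2.1]
          exact le_antisymm (le_trans (measure_mono this) (by simp)) (_root_.zero_le)
        exact le_antisymm (le_trans (measure_mono hsub) (le_of_eq (measure_iUnion_null hnull)))
          (_root_.zero_le)
      rw [hB0]; exact _root_.zero_le
    · push_neg at ht20
      have ht21 : t₂ < 1 := by rw [ht2def]; linarith
      set X : Fin N → Ω → ℝ := fun i ω => if U i ω ≤ t₂ then (1:ℝ) else 0 with hXdef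
      have hXind : ProbabilityTheory.iIndepFun X μ :=
        hindep.comp (fun _ => fun x : ℝ => if x ≤ t₂ then (1:ℝ) else 0)
          (fun _ => Measurable.ite measurableSet_Iic measurable_const measurable_const)
      have hXm : ∀ i, Measurable (X i) := fun i =>
        Measurable.ite ((hUmeas i) measurableSet_Iic) measurable_const measurable_const
      have hX01 : ∀ i ω, X i ω = 0 ∨ X i ω = 1 := by
        intro i ω; rw [hXdef]; simp only; split_ifs <;> simp
      have hXq : ∀ i, μ {ω | X i ω = 1} = ENNReal.ofReal t₂ := by
        intro i
        have hset : {ω | X i ω = 1} = U i ⁻¹' Set.Iic t₂ := by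
          ext ω; by_cases h : U i ω ≤ t₂ <;> simp [hXdef, h]
        rw [hset, hprob i _ measurableSet_Iic]
        have : Set.Iic t₂ ∩ Set.Icc 0 1 = Set.Icc 0 t₂ := by
          ext x
          simp only [Set.mem_Iic, Set.mem_Icc, Set.mem_inter_iff]
          constructor
          · rintro ⟨h1, h2, h3⟩; exact ⟨h2, h1⟩
          · rintro ⟨h1, h2⟩; exact ⟨h2, h1, by linarith⟩
        rw [this, Real.volume_Icc]
        norm_num
      have hNε0 : 0 < (N:ℝ)*ε := mul_pos hN0 hε0
      set a : ℝ := (k:ℝ) - (N:ℝ)*t₂ with hadef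
      have ha0 : 0 < a := by
        rw [hadef, ht2def]
        linarith [hkp, hNε0]
      have haNε : s0 + 5*L ≤ a := by
        rw [hadef, ht2def, ← hNε]
        linarith [hkp]
      have hw : (N:ℝ)*t₂*(1-t₂) ≤ (N:ℝ)*p*(1-p) + (s0 + 5*L) := by
        rw [← hNε, ht2def]
        have hh : 0 ≤ (N:ℝ)*ε*(2 - 2*p + ε) :=
          mul_nonneg (mul_nonneg hN0.le hε0.le) (by linarith)
        nlinarith [hh]
      have hcond : 2*L*((N:ℝ)*t₂*(1-t₂) + a/3) ≤ a^2 :=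
        numeric_ineq hP0 hL0.le hs0 hs0sq hw haNε
      have htail := indicator_tail_bound μ N t₂ a L (k:ℝ) ⟨ht20, ht21⟩ hN1 ha0 hL0.le hcond
        (le_of_eq (by rw [hadef]; ring)) X hXind hXm hX01 hXq
      have hsub : B ⊆ {ω | (k:ℝ) ≤ ∑ i, X i ω} := by
        intro ω hω
        rw [hBdef] at hω
        simp only [Set.mem_setOf_eq]
        have hsum : ∑ i, X i ω = ((c t₂ ω : ℕ) : ℝ) := by
          simp only [hXdef, hcdef]
          rw [Finset.sum_boole]
        rw [hsum]
        exact_mod_cast hω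
      have := le_trans (ENNReal.toReal_mono (measure_ne_top μ _) (measure_mono hsub)) htail
      rw [hexpL] at this
      exact (ENNReal.le_ofReal_iff_toReal_le (measure_ne_top μ _) (by linarith)).mpr this
  -- tail bound for A
  have hAbound : μ A ≤ ENNReal.ofReal (δ/2) := by
    by_cases ht11 : 1 ≤ t₁
    · have hA0 : μ A = 0 := by
        have hsub : A ⊆ ⋃ i : Fin N, (U i ⁻¹' Set.Ioi t₁) := by
          intro ω hω
          rw [hAdef] at hω
          simp only [Set.mem_setOf_eq] at hω
          by_contra hcon
          simp only [Set.mem_iUnion, Set.mem_preimage, Set.mem_Ioi, not_exists, not_lt] at hcon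
          have : Finset.univ.filter (fun i : Fin N => U i ω ≤ t₁) = Finset.univ :=
            Finset.filter_true_of_mem (fun i _ => hcon i)
          rw [hcdef] at hω
          simp only at hω
          rw [this, Finset.card_univ, Fintype.card_fin] at hω
          omega
        have hnull : ∀ i : Fin N, μ (U i ⁻¹' Set.Ioi t₁) = 0 := by
          intro i
          rw [hprob i _ measurableSet_Ioi]
          have : Set.Ioi t₁ ∩ Set.Icc 0 1 ⊆ (∅ : Set ℝ) := by
            intro x hx
            simp only [Set.mem_Ioi, Set.mem_Icc, Set.mem_inter_iff] at hx
            linarith [hx.1, hx.2.2]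
          exact le_antisymm (le_trans (measure_mono this) (by simp)) (_root_.zero_le)
        exact le_antisymm (le_trans (measure_mono hsub) (le_of_eq (measure_iUnion_null hnull)))
          (_root_.zero_le)
      rw [hA0]; exact _root_.zero_le
    · push_neg at ht11
      have ht10 : 0 < t₁ := by rw [ht1def]; linarith
      have hNε0 : 0 < (N:ℝ)*ε := mul_pos hN0 hε0
      set X : Fin N → Ω → ℝ := fun i ω => if U i ω ≤ t₁ then (0:ℝ) else 1 with hXdef
      have hXind : ProbabilityTheory.iIndepFun X μ :=
        hindep.comp (fun _ => fun x : ℝ => if x ≤ t₁ then (0:ℝ) else 1)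
          (fun _ => Measurable.ite measurableSet_Iic measurable_const measurable_const)
      have hXm : ∀ i, Measurable (X i) := fun i =>
        Measurable.ite ((hUmeas i) measurableSet_Iic) measurable_const measurable_const
      have hX01 : ∀ i ω, X i ω = 0 ∨ X i ω = 1 := by
        intro i ω; rw [hXdef]; simp only; split_ifs <;> simp
      have hXq : ∀ i, μ {ω | X i ω = 1} = ENNReal.ofReal (1 - t₁) := by
        intro i
        have hset : {ω | X i ω = 1} = U i ⁻¹' Set.Ioi t₁ := by
          ext ω
          simp only [hXdef, Set.mem_setOf_eq, Set.mem_preimage, Set.mem_Ioi]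
          by_cases h : U i ω ≤ t₁
          · rw [if_pos h]
            simp only [zero_ne_one, false_iff, not_lt]
            exact h
          · rw [if_neg h]
            exact iff_of_true rfl (not_le.mp h)
        rw [hset, hprob i _ measurableSet_Ioi]
        have : Set.Ioi t₁ ∩ Set.Icc 0 1 = Set.Ioc t₁ 1 := by
          ext x
          simp only [Set.mem_Ioi, Set.mem_Icc, Set.mem_inter_iff, Set.mem_Ioc]
          constructor
          · rintro ⟨h1, _, h3⟩; exact ⟨h1, h3⟩
          · rintro ⟨h1, h2⟩; exact ⟨h1, by linarith, h2⟩
        rw [this, Real.volume_Ioc]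
      set a : ℝ := (N:ℝ) - (k:ℝ) + 1 - (N:ℝ)*(1 - t₁) with hadef
      have ha0 : 0 < a := by
        rw [hadef, ht1def]
        linarith [hk_lt, hNε0]
      have haNε : s0 + 5*L ≤ a := by
        rw [hadef, ht1def, ← hNε]
        linarith [hk_lt]
      have hw : (N:ℝ)*(1-t₁)*(1-(1-t₁)) ≤ (N:ℝ)*p*(1-p) + (s0 + 5*L) := by
        rw [← hNε, ht1def]
        have hh : 0 ≤ (N:ℝ)*ε*(2*p + ε) :=
          mul_nonneg (mul_nonneg hN0.le hε0.le) (by linarith)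
        linarith only [hh]
      have hcond : 2*L*((N:ℝ)*(1-t₁)*(1-(1-t₁)) + a/3) ≤ a^2 :=
        numeric_ineq hP0 hL0.le hs0 hs0sq hw haNε
      have htail := indicator_tail_bound μ N (1-t₁) a L ((N:ℝ) - (k:ℝ) + 1)
        ⟨by linarith, by linarith⟩ hN1 ha0 hL0.le hcond
        (le_of_eq (by rw [hadef]; ring)) X hXind hXm hX01 hXq
      have hsub : A ⊆ {ω | (N:ℝ) - (k:ℝ) + 1 ≤ ∑ i, X i ω} := by
        intro ω hω
        rw [hAdef] at hω
        simp only [Set.mem_setOf_eq] at hω ⊢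
        have hsum : ∑ i, X i ω = (N:ℝ) - ((c t₁ ω : ℕ) : ℝ) := by
          have h1 : ∀ i : Fin N, X i ω = 1 - (if U i ω ≤ t₁ then (1:ℝ) else 0) := by
            intro i
            rw [hXdef]
            simp only
            split_ifs <;> ring
          rw [Finset.sum_congr rfl (fun i _ => h1 i), Finset.sum_sub_distrib,
            Finset.sum_const, Finset.card_univ, Fintype.card_fin, nsmul_eq_mul, mul_one]
          congr 1
          simp only [hcdef]
          rw [Finset.sum_boole]
        rw [hsum]
        have hck : (c t₁ ω : ℝ) + 1 ≤ (k : ℝ) := by exact_mod_cast Nat.succ_le_of_lt hω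
        linarith
      have := le_trans (ENNReal.toReal_mono (measure_ne_top μ _) (measure_mono hsub)) htail
      rw [hexpL] at this
      exact (ENNReal.le_ofReal_iff_toReal_le (measure_ne_top μ _) (by linarith)).mpr this
  -- combine
  have hU : μ (A ∪ B) ≤ ENNReal.ofReal δ := by
    calc μ (A ∪ B) ≤ μ A + μ B := measure_union_le A B
    _ ≤ ENNReal.ofReal (δ/2) + ENNReal.ofReal (δ/2) := add_le_add hAbound hBbound
    _ = ENNReal.ofReal δ := by
        rw [← ENNReal.ofReal_add (by linarith) (by linarith)]
        norm_num
  have hgood : (A ∪ B)ᶜ ⊆ {ω | |V ω - p| ≤ ε} := by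
    intro ω hω
    simp only [Set.mem_compl_iff, Set.mem_union, not_or] at hω
    obtain ⟨hωA, hωB⟩ := hω
    rw [hAdef] at hωA
    rw [hBdef] at hωB
    simp only [Set.mem_setOf_eq, not_lt, not_le] at hωA hωB
    have h1 : V ω ≤ t₁ := claimA ω t₁ hωA
    have h2 : t₂ ≤ V ω := by
      by_contra hcon
      push_neg at hcon
      exact absurd (claimB ω t₂ hcon) (by omega)
    rw [Set.mem_setOf_eq, abs_le]
    rw [ht1def] at h1
    rw [ht2def] at h2
    constructor <;> linarith only [h1, h2]
  have hmono1 : μ ((A ∪ B)ᶜ) ≤ μ {ω | |V ω - p| ≤ ε} := measure_mono hgood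
  have hcompl : μ ((A ∪ B)ᶜ) = 1 - μ (A ∪ B) := prob_compl_eq_one_sub (hAmeas.union hBmeas)
  have hUδ : (μ (A ∪ B)).toReal ≤ δ := by
    have := ENNReal.toReal_mono (by simp) hU
    rwa [ENNReal.toReal_ofReal hδ0.le] at this
  have hstep : (1 - δ : ℝ) ≤ (μ ((A ∪ B)ᶜ)).toReal := by
    rw [hcompl, ENNReal.toReal_sub_of_le prob_le_one (by simp)]
    simp only [ENNReal.toReal_one]
    linarith only [hUδ]
  exact le_trans hstep (ENNReal.toReal_mono (measure_ne_top μ _) hmono1)
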